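/- Let A be the (n+1)-dimensional n-ary algebra of type (C_2) over a field F of characteristic zero, with [e_1,...,e_{n-1},e_{n+1}] = e_n + β e_{n+1} (β ≠ 0), [e_1,...,e_n] = e_{n+1}, other basic products zero. Let φ be a δ-derivation with δ = -1, matrix entries β_{ij}. Then β_{n+1,n} = β_{n,n+1} = 0 and β_{nn} = β_{n+1,n+1} = -(1/2)·Σ_{i=1}^{n-1} β_{ii}. -/

import Mathlib

open Function

lemma alt_perm_zero {F A : Type*} [Field F] [AddCommGroup A] [Module F A]
    {n : ℕ} (br : AlternatingMap F A A (Fin n)) (b : Fin (n + 1) → A)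
    (c : Fin (n + 1)) (hc : br (b ∘ c.succAbove) = 0)
    (u : Fin n → Fin (n + 1)) (hu : Function.Injective u) (hmiss : ∀ k, u k ≠ c) :
    br (b ∘ u) = 0 := by
  classical
  have hinj : Function.Injective (fun k => (⟨u k, hmiss k⟩ : {y : Fin (n+1) // y ≠ c})) := by
    intro a b' h
    exact hu (congrArg Subtype.val h)
  have hcard : Fintype.card {y : Fin (n+1) // y ≠ c} = n := by
    have := Fintype.card_subtype_compl (fun y : Fin (n+1) => y = c)
    simpa [Fintype.card_subtype_eq] using this
  have hbij : Function.Bijective (fun k => (⟨u k, hmiss k⟩ : {y : Fin (n+1) // y ≠ c})) :=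
    (Fintype.bijective_iff_injective_and_card _).2 ⟨hinj, by simp [hcard]⟩
  have hrange : Set.range u = Set.range c.succAbove := by
    rw [Fin.range_succAbove]
    ext y
    constructor
    · rintro ⟨k, rfl⟩; exact hmiss k
    · intro hy
      obtain ⟨k, hk⟩ := hbij.2 ⟨y, hy⟩
      exact ⟨k, congrArg Subtype.val hk⟩
  have hsinj : Function.Injective c.succAbove := Fin.succAbove_right_injective
  let σ : Equiv.Perm (Fin n) :=
    (Equiv.ofInjective u hu).trans ((Equiv.setCongr hrange).trans (Equiv.ofInjective _ hsinj).symm)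
  have hcomp : c.succAbove ∘ σ = u := by
    funext k
    show c.succAbove ((Equiv.ofInjective _ hsinj).symm (Equiv.setCongr hrange (Equiv.ofInjective u hu k))) = u k
    rw [Equiv.apply_ofInjective_symm hsinj]
    rfl
  have : b ∘ u = (b ∘ c.succAbove) ∘ σ := by
    rw [Function.comp_assoc, hcomp]
  rw [this, AlternatingMap.map_perm, hc, smul_zero]

lemma sum_ite_special {M : Type*} [AddCommGroup M] {ι : Type*} [Fintype ι] [DecidableEq ι]
    (g : ι → M) (p : ι) (X : M) :
    ∑ i, (if i = p then X else g i) = ∑ i, g i + (X - g p) := by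
  have h : ∀ i, (if i = p then X else g i) = g i + (if i = p then X - g p else 0) := by
    intro i
    by_cases hi : i = p
    · subst hi; simp
    · simp [hi]
  rw [Finset.sum_congr rfl (fun i _ => h i), Finset.sum_add_distrib, Finset.sum_ite_eq',
    if_pos (Finset.mem_univ p)]


/-- Type `(C_2)`, `δ = -1` case: `β_{n+1,n} = β_{n,n+1} = 0` and
`β_{nn} = β_{n+1,n+1} = -(1/2)·Σ_{i=1}^{n-1} β_{ii}`. -/
theorem antiderivation_C2_matrix
    {F A : Type*} [Field F] [CharZero F] [AddCommGroup A] [Module F A]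
    {n : ℕ} (hn : 2 ≤ n)
    (b : Module.Basis (Fin (n + 1)) F A)
    (βc : F) (hβc : βc ≠ 0)
    (br : AlternatingMap F A A (Fin n))
    (hbr : ∀ i : Fin (n + 1),
      br (b ∘ i.succAbove) =
        if (i : ℕ) = n - 1 then b i + βc • b (Fin.last n)
        else if (i : ℕ) = n then b (Fin.last n)
        else 0)
    (φ : A →ₗ[F] A)
    (hφ : ∀ x : Fin n → A,
      φ (br x) = (-1 : F) • ∑ i, br (Function.update x i (φ (x i)))) :
    b.repr (φ (b (Fin.last n))) ⟨n - 1, by omega⟩ = 0 ∧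
    b.repr (φ (b ⟨n - 1, by omega⟩)) (Fin.last n) = 0 ∧
    b.repr (φ (b ⟨n - 1, by omega⟩)) ⟨n - 1, by omega⟩ =
      -(1 / 2) * ∑ k ∈ Finset.univ.filter (fun k : Fin (n + 1) => (k : ℕ) < n - 1),
        b.repr (φ (b k)) k ∧
    b.repr (φ (b (Fin.last n))) (Fin.last n) =
      -(1 / 2) * ∑ k ∈ Finset.univ.filter (fun k : Fin (n + 1) => (k : ℕ) < n - 1),
        b.repr (φ (b k)) k := by
  classical
  set L : Fin (n+1) := Fin.last n with hL
  set m : Fin (n+1) := ⟨n - 1, by omega⟩ with hm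
  set p : Fin n := ⟨n - 1, by omega⟩ with hp
  have hmval : (m : ℕ) = n - 1 := rfl
  have hLval : (L : ℕ) = n := rfl
  have hmL : m ≠ L := by
    simp only [Fin.ne_iff_vne, hmval, hLval]; omega
  have hcsp : p.castSucc = m := by
    apply Fin.ext; simp [hp, hm]
  -- basic bracket values
  have h0 : ∀ c : Fin (n+1), (c : ℕ) < n - 1 → br (b ∘ c.succAbove) = 0 := by
    intro c hc
    rw [hbr c, if_neg (by omega), if_neg (by omega)]
  set v : Fin n → A := fun k => b k.castSucc with hv
  have hbv : br v = b L := by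
    have : b ∘ L.succAbove = v := by
      funext k; rw [hL]; simp [hv, Fin.succAbove_last]
    rw [← this, hbr L, if_neg (by simp [hLval]; omega), if_pos hLval]
  set W : Fin n → Fin (n+1) := fun i => if i = p then L else i.castSucc with hW
  set x' : Fin n → A := fun k => b (W k) with hx'
  have hWsa : ∀ k, W k = m.succAbove k := by
    intro k
    by_cases hk : k = p
    · subst hk
      rw [hW]; simp only [if_pos rfl]
      rw [Fin.succAbove_of_le_castSucc _ _ (by rw [Fin.le_def]; simp [hcsp])]
      apply Fin.ext; simp [hp, hL, Fin.val_succ]; omega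
    · rw [hW]; simp only [if_neg hk]
      rw [Fin.succAbove_of_castSucc_lt _ _ (by
        rw [Fin.lt_def]; simp [hm]
        have := k.isLt
        have : (k : ℕ) ≠ n - 1 := fun h => hk (Fin.ext h)
        omega)]
  have hbx' : br x' = b m + βc • b L := by
    have : b ∘ m.succAbove = x' := by
      funext k; simp [hx', hWsa k]
    rw [← this, hbr m, if_pos hmval]
  have hx'v : x' = Function.update v p (b L) := by
    funext k
    by_cases hk : k = p
    · subst hk; simp [hx', hW, hv]
    · simp [hx', hW, hv, hk, Function.update_of_ne hk]
  have hcsL : ∀ i : Fin n, i.castSucc ≠ L := by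
    intro i h
    have := congrArg Fin.val h
    simp [hLval] at this
    have := i.isLt
    omega
  have hcsm : ∀ i : Fin n, i ≠ p → i.castSucc ≠ m := by
    intro i hip h
    have := congrArg Fin.val h
    simp [hmval] at this
    exact hip (Fin.ext this)
  have hE : ∀ (i : Fin n) (j : Fin (n+1)), br (Function.update v i (b j)) =
      (if j = i.castSucc then b L else 0) +
      (if i = p then (if j = L then b m + βc • b L else 0) else 0) := by
    intro i j
    by_cases hj1 : j = i.castSucc
    · subst hj1
      rw [show b i.castSucc = v i from rfl, Function.update_eq_self, hbv, if_pos rfl,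
        if_neg (hcsL i)]
      simp
    · by_cases hj2 : j = L
      · subst hj2
        by_cases hip : i = p
        · subst hip
          rw [← hx'v, hbx', if_neg hj1, if_pos rfl, if_pos rfl, zero_add]
        · rw [if_neg hj1, if_neg hip, add_zero]
          have hilt : (i : ℕ) < n - 1 := by
            have h1 := i.isLt
            have h2 : (i : ℕ) ≠ n - 1 := fun h => hip (Fin.ext h)
            omega
          have hueq : Function.update v i (b L) =
              b ∘ (fun k => if k = i then L else k.castSucc) := by
            funext k
            by_cases hk : k = i
            · subst hk; simp
            · simp [hk, Function.update_of_ne hk, hv]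
          rw [hueq]
          apply alt_perm_zero br b i.castSucc (h0 _ (by simpa using hilt))
          · intro a a' h
            by_cases ha : a = i
            · by_cases ha' : a' = i
              · rw [ha, ha']
              · exfalso
                subst ha
                simp only [if_pos rfl, if_neg ha'] at h
                have h2 := congrArg Fin.val h
                simp [hLval] at h2
                have h3 := a'.isLt
                omega
            · by_cases ha' : a' = i
              · exfalso
                subst ha'
                simp only [if_pos rfl, if_neg ha] at h
                have h2 := congrArg Fin.val h
                simp [hLval] at h2
                have h3 := a.isLt
                omega
              · simp only [if_neg ha, if_neg ha'] at h
                exact Fin.castSucc_injective _ h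
          · intro k
            by_cases hk : k = i
            · subst hk; simp only [ite_true]; exact fun h => (hcsL k) h.symm
            · simp only [hk, ite_false]
              exact fun h => hk (Fin.castSucc_injective _ h)
      · have hjlt : (j : ℕ) < n := by
          have h1 := j.isLt
          have h2 : (j : ℕ) ≠ n := fun h => hj2 (Fin.ext (by rw [h, hLval]))
          omega
        have hzero : br (Function.update v i (b j)) = 0 := by
          refine AlternatingMap.map_eq_zero_of_eq br _
            (i := i) (j := ⟨(j : ℕ), hjlt⟩) ?_ ?_
          · rw [Function.update_self, Function.update_of_ne (by
              intro h
              exact hj1 (Fin.ext (by simpa using congrArg Fin.val h)))]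
            show b j = b (Fin.castSucc ⟨(j : ℕ), hjlt⟩)
            congr 1
          · intro h
            exact hj1 (Fin.ext (by simpa using (congrArg Fin.val h).symm))
        rw [hzero, if_neg hj1, zero_add]
        simp [hj2]
  have hE' : ∀ (i : Fin n) (j : Fin (n+1)), br (Function.update x' i (b j)) =
      (if j = W i then b m + βc • b L else 0) +
      (if i = p then (if j = m then b L else 0) else 0) := by
    intro i j
    have hWp : W p = L := by simp [hW]
    by_cases hj1 : j = W i
    · subst hj1
      rw [show b (W i) = x' i from rfl, Function.update_eq_self, hbx', if_pos rfl]
      have hz : (if i = p then (if W i = m then b L else 0) else 0) = 0 := by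
        by_cases hip : i = p
        · subst hip
          rw [hWp, if_neg (Ne.symm hmL), if_pos rfl]
        · rw [if_neg hip]
      rw [hz, add_zero]
    · by_cases hip : i = p
      · subst hip
        by_cases hj2 : j = m
        · subst hj2
          rw [if_neg hj1, if_pos rfl, if_pos rfl, zero_add]
          have hupd : Function.update x' p (b m) = v := by
            funext k
            by_cases hk : k = p
            · subst hk
              rw [Function.update_self]
              show b m = b p.castSucc
              rw [hcsp]
            · rw [Function.update_of_ne hk]
              show b (W k) = v k
              simp [hW, hk, hv]
          rw [hupd, hbv]
        · have hjlt : (j : ℕ) < n := by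
            have h1 := j.isLt
            have h2 : (j : ℕ) ≠ n := by
              intro h
              exact hj1 (Fin.ext (by rw [h, hWp, hLval]))
            omega
          have hkp : (⟨(j : ℕ), hjlt⟩ : Fin n) ≠ p := by
            intro h
            apply hj2
            apply Fin.ext
            rw [hmval]
            exact congrArg Fin.val h
          have hzero : br (Function.update x' p (b j)) = 0 := by
            refine AlternatingMap.map_eq_zero_of_eq br _
              (i := p) (j := ⟨(j : ℕ), hjlt⟩) ?_ ?_
            · rw [Function.update_self, Function.update_of_ne hkp]
              show b j = b (W ⟨(j : ℕ), hjlt⟩)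
              congr 1
              apply Fin.ext
              simp [hW, hkp]
            · exact fun h => hkp h.symm
          rw [hzero, if_neg hj1, if_pos rfl, if_neg hj2, zero_add]
      · have hWi : W i = i.castSucc := by simp [hW, hip]
        have hilt : (i : ℕ) < n - 1 := by
          have h1 := i.isLt
          have h2 : (i : ℕ) ≠ n - 1 := fun h => hip (Fin.ext h)
          omega
        by_cases hj2 : j = L
        · subst hj2
          have hzero : br (Function.update x' i (b L)) = 0 := by
            refine AlternatingMap.map_eq_zero_of_eq br _ (i := i) (j := p) ?_ hip
            rw [Function.update_self, Function.update_of_ne (fun h => hip h.symm)]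
            show b L = b (W p)
            rw [hWp]
          rw [hzero, if_neg hj1, if_neg hip, add_zero]
        · by_cases hj3 : j = m
          · subst hj3
            rw [if_neg hj1, if_neg hip, add_zero]
            have hueq : Function.update x' i (b m) =
                b ∘ (fun k => if k = i then m else W k) := by
              funext k
              by_cases hk : k = i
              · subst hk; simp
              · rw [Function.update_of_ne hk]
                simp [Function.comp, hk, hx']
            rw [hueq]
            apply alt_perm_zero br b i.castSucc (h0 _ (by simpa using hilt))
            · intro a a' h
              by_cases ha : a = i
              · by_cases ha' : a' = i
                · rw [ha, ha']
                · exfalso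
                  subst ha
                  simp only [if_pos rfl, if_neg ha'] at h
                  by_cases hap : a' = p
                  · rw [hap, hWp] at h
                    exact hmL h
                  · have h2 := congrArg Fin.val h
                    simp [hW, hap, hmval] at h2
                    exact hap (Fin.ext h2.symm)
              · by_cases ha' : a' = i
                · exfalso
                  subst ha'
                  simp only [if_pos rfl, if_neg ha] at h
                  by_cases hap : a = p
                  · rw [hap, hWp] at h
                    exact hmL h.symm
                  · have h2 := congrArg Fin.val h
                    simp [hW, hap, hmval] at h2
                    exact hap (Fin.ext h2)
                · simp only [if_neg ha, if_neg ha'] at h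
                  by_cases hap : a = p
                  · by_cases hap' : a' = p
                    · rw [hap, hap']
                    · exfalso
                      rw [hap, hWp] at h
                      have h2 := congrArg Fin.val h
                      simp [hW, hap', hLval] at h2
                      have h3 := a'.isLt
                      omega
                  · by_cases hap' : a' = p
                    · exfalso
                      rw [hap', hWp] at h
                      have h2 := congrArg Fin.val h
                      simp [hW, hap, hLval] at h2
                      have h3 := a.isLt
                      omega
                    · have h2 := congrArg Fin.val h
                      simp [hW, hap, hap'] at h2
                      exact Fin.ext h2
            · intro k
              by_cases hk : k = i
              · subst hk
                simp only [if_pos rfl]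
                exact Ne.symm (hcsm k hip)
              · simp only [if_neg hk]
                by_cases hkp : k = p
                · rw [hkp, hWp]
                  exact Ne.symm (hcsL i)
                · simp only [hW, if_neg hkp]
                  exact fun h => hk (Fin.castSucc_injective _ h)
          · have hjlt : (j : ℕ) < n := by
              have h1 := j.isLt
              have h2 : (j : ℕ) ≠ n := by
                intro h
                exact hj2 (Fin.ext (by rw [h, hLval]))
              omega
            have hki : (⟨(j : ℕ), hjlt⟩ : Fin n) ≠ i := by
              intro h
              apply hj1
              rw [hWi]
              exact Fin.ext (by simpa using (congrArg Fin.val h))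
            have hkp : (⟨(j : ℕ), hjlt⟩ : Fin n) ≠ p := by
              intro h
              apply hj3
              apply Fin.ext
              rw [hmval]
              exact congrArg Fin.val h
            have hzero : br (Function.update x' i (b j)) = 0 := by
              refine AlternatingMap.map_eq_zero_of_eq br _
                (i := i) (j := ⟨(j : ℕ), hjlt⟩) ?_ (fun h => hki h.symm)
              rw [Function.update_self, Function.update_of_ne hki]
              show b j = b (W ⟨(j : ℕ), hjlt⟩)
              congr 1
              apply Fin.ext
              simp [hW, hkp]
            rw [hzero, if_neg hj1, if_neg hip, add_zero]
  -- expansion of an updated slot in the basis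
  have hexp : ∀ (y : Fin n → A) (i : Fin n) (z : A),
      br (Function.update y i z) = ∑ j, b.repr z j • br (Function.update y i (b j)) := by
    intro y i z
    conv_lhs => rw [← Module.Basis.sum_repr b z]
    rw [show (br (Function.update y i (∑ j, b.repr z j • b j)) : A) =
      br.toMultilinearMap (Function.update y i (∑ j, b.repr z j • b j)) from rfl,
      MultilinearMap.map_update_sum]
    exact Finset.sum_congr rfl fun j _ => br.map_update_smul y i _ _
  set SN : F := ∑ i : Fin n, b.repr (φ (b i.castSucc)) i.castSucc with hSN
  have eqN : φ (b L) = (-1 : F) • (SN • b L + b.repr (φ (b m)) L • (b m + βc • b L)) := by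
    have h := hφ v
    rw [hbv] at h
    rw [h]
    have step : ∀ i : Fin n, br (Function.update v i (φ (v i))) =
        b.repr (φ (b i.castSucc)) i.castSucc • b L +
        (if i = p then b.repr (φ (b m)) L • (b m + βc • b L) else 0) := by
      intro i
      rw [show φ (v i) = φ (b i.castSucc) from rfl, hexp v i,
        Finset.sum_congr rfl (fun j _ => by rw [hE i j])]
      by_cases hip : i = p
      · subst hip
        simp only [if_pos rfl, smul_add, smul_ite, smul_zero, Finset.sum_add_distrib,
          Finset.sum_ite_eq', Finset.mem_univ, if_true, hcsp]
      · simp only [if_neg hip, smul_add, smul_ite, smul_zero, Finset.sum_add_distrib,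
          Finset.sum_ite_eq', Finset.mem_univ, if_true, Finset.sum_const_zero, add_zero]
    rw [Finset.sum_congr rfl (fun i _ => step i), Finset.sum_add_distrib, ← Finset.sum_smul,
      Finset.sum_ite_eq', if_pos (Finset.mem_univ p)]
  set SW : F := ∑ i : Fin n, b.repr (φ (b (W i))) (W i) with hSWdef
  have eqM : φ (b m) + βc • φ (b L) =
      (-1 : F) • (SW • (b m + βc • b L) + b.repr (φ (b L)) m • b L) := by
    have h := hφ x'
    rw [hbx', map_add, map_smul] at h
    rw [h]
    have step : ∀ i : Fin n, br (Function.update x' i (φ (x' i))) =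
        b.repr (φ (b (W i))) (W i) • (b m + βc • b L) +
        (if i = p then b.repr (φ (b L)) m • b L else 0) := by
      intro i
      rw [show φ (x' i) = φ (b (W i)) from rfl, hexp x' i,
        Finset.sum_congr rfl (fun j _ => by rw [hE' i j])]
      by_cases hip : i = p
      · subst hip
        simp only [if_pos rfl, smul_add, smul_ite, smul_zero, Finset.sum_add_distrib,
          Finset.sum_ite_eq', Finset.mem_univ, if_true]
        rw [show W p = L by simp [hW]]
      · simp only [if_neg hip, smul_add, smul_ite, smul_zero, Finset.sum_add_distrib,
          Finset.sum_ite_eq', Finset.mem_univ, if_true, Finset.sum_const_zero, add_zero]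
    rw [Finset.sum_congr rfl (fun i _ => step i), Finset.sum_add_distrib, ← Finset.sum_smul,
      Finset.sum_ite_eq', if_pos (Finset.mem_univ p)]
  have hSW : SW = SN + (b.repr (φ (b L)) L - b.repr (φ (b m)) m) := by
    rw [hSWdef, Finset.sum_congr rfl (fun i _ => show b.repr (φ (b (W i))) (W i) =
        if i = p then b.repr (φ (b L)) L else b.repr (φ (b i.castSucc)) i.castSucc by
      by_cases hip : i = p
      · subst hip; rw [if_pos rfl, show W p = L by simp [hW]]
      · rw [if_neg hip, show W i = i.castSucc by simp [hW, hip]]),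
      sum_ite_special, hSN, hcsp]
  have hneLm : ¬ L = m := Ne.symm hmL
  have hnemL : ¬ m = L := hmL
  -- coordinate equations
  have eqNm : b.repr (φ (b L)) m = -(b.repr (φ (b m)) L) := by
    have h := congrArg (fun z => b.repr z m) eqN
    simp only [map_smul, map_add, Finsupp.smul_apply, Finsupp.add_apply,
      Module.Basis.repr_self_apply, smul_eq_mul, hneLm, if_false, if_true, ite_true, ite_false,
      if_pos rfl, mul_zero, mul_one, add_zero, zero_add] at h
    linear_combination h
  have eqNL : b.repr (φ (b L)) L = -(SN + βc * b.repr (φ (b m)) L) := by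
    have h := congrArg (fun z => b.repr z L) eqN
    simp only [map_smul, map_add, Finsupp.smul_apply, Finsupp.add_apply,
      Module.Basis.repr_self_apply, smul_eq_mul, hnemL, if_false, if_true, ite_true, ite_false,
      if_pos rfl, mul_zero, mul_one, add_zero, zero_add] at h
    linear_combination h
  have eqMm : b.repr (φ (b m)) m + βc * b.repr (φ (b L)) m = -SW := by
    have h := congrArg (fun z => b.repr z m) eqM
    simp only [map_smul, map_add, Finsupp.smul_apply, Finsupp.add_apply,
      Module.Basis.repr_self_apply, smul_eq_mul, hneLm, if_false, if_true, ite_true, ite_false,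
      if_pos rfl, mul_zero, mul_one, add_zero, zero_add] at h
    linear_combination h
  have eqML : b.repr (φ (b m)) L + βc * b.repr (φ (b L)) L =
      -(SW * βc + b.repr (φ (b L)) m) := by
    have h := congrArg (fun z => b.repr z L) eqM
    simp only [map_smul, map_add, Finsupp.smul_apply, Finsupp.add_apply,
      Module.Basis.repr_self_apply, smul_eq_mul, hnemL, if_false, if_true, ite_true, ite_false,
      if_pos rfl, mul_zero, mul_one, add_zero, zero_add] at h
    linear_combination h
  -- solve the linear system
  have E1 : βc * b.repr (φ (b L)) m + SN + b.repr (φ (b L)) L = 0 := by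
    linear_combination eqMm - hSW
  have E2 : βc * b.repr (φ (b m)) L + SN + b.repr (φ (b L)) L = 0 := by
    linear_combination eqNL
  have hac : b.repr (φ (b L)) m = b.repr (φ (b m)) L :=
    mul_left_cancel₀ hβc (by linear_combination E1 - E2)
  have hcc0 : b.repr (φ (b m)) L = 0 := by
    have h2 : (2 : F) * b.repr (φ (b m)) L = 0 := by linear_combination eqNm - hac
    exact (mul_eq_zero.mp h2).resolve_left two_ne_zero
  have haa0 : b.repr (φ (b L)) m = 0 := by rw [hac, hcc0]
  have heSN : b.repr (φ (b L)) L = -SN := by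
    linear_combination E1 - βc * haa0
  have hde : b.repr (φ (b m)) m = b.repr (φ (b L)) L := by
    refine mul_left_cancel₀ hβc ?_
    linear_combination -eqML + βc * hSW + βc * heSN + hcc0 + haa0
  -- relating SN to the sum in the statement
  have hT : ∑ k : Fin (n+1), b.repr (φ (b k)) k = SN + b.repr (φ (b L)) L := by
    rw [Fin.sum_univ_castSucc, hSN, hL]
  have hsetfilter : Finset.univ.filter (fun k : Fin (n+1) => ¬((k : ℕ) < n - 1)) = {m, L} := by
    ext k
    simp only [Finset.mem_filter, Finset.mem_univ, true_and, Finset.mem_insert,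
      Finset.mem_singleton, Fin.ext_iff, hmval, hLval]
    have h1 := k.isLt
    omega
  have hfilter : ∑ k ∈ Finset.univ.filter (fun k : Fin (n+1) => (k : ℕ) < n - 1),
        b.repr (φ (b k)) k + (b.repr (φ (b m)) m + b.repr (φ (b L)) L) =
      ∑ k : Fin (n+1), b.repr (φ (b k)) k := by
    rw [← Finset.sum_filter_add_sum_filter_not Finset.univ
      (fun k : Fin (n+1) => (k : ℕ) < n - 1) (fun k => b.repr (φ (b k)) k), hsetfilter,
      Finset.sum_insert (by simp [hmL]), Finset.sum_singleton]
  have hSg : ∑ k ∈ Finset.univ.filter (fun k : Fin (n+1) => (k : ℕ) < n - 1),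
      b.repr (φ (b k)) k = SN - b.repr (φ (b m)) m := by
    linear_combination hfilter + hT
  refine ⟨haa0, hcc0, ?_, ?_⟩
  · linear_combination hSg / 2 + hde / 2 + heSN / 2
  · linear_combination hSg / 2 - hde / 2 + heSN / 2
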